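/- For all integers n and d with n/2 ≤ d ≤ n − 2, t(n,d) = n; that is, the minimum number of edges of a d-rainbow connected graph of order n is exactly n. -/

import Mathlib

/-- An edge-coloring with `k` colors (adjacent edges may receive the same color) is a
`k`-rainbow connected coloring if every two distinct vertices are joined by a path whose
edges all receive distinct colors; `G` is `k`-rainbow connected if such a coloring exists. -/
def IsRainbowConnected {V : Type*} (G : SimpleGraph V) (k : ℕ) : Prop :=
  ∃ c : Sym2 V → Fin k, ∀ u v : V, u ≠ v →
    ∃ p : G.Walk u v, p.IsPath ∧ (p.edges.map c).Nodup

namespace RainbowAux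

open SimpleGraph

lemma key_arith (n m u t1 t2 k : ℕ) (hm : n ≤ 2 * m) (hm0 : 0 < m) (hmn : m < n)
    (hu : u < n) (hk : k ≤ n - m) (h1 : t1 < k) (h2 : t2 < k)
    (heq : (u + t1) % n % m = (u + t2) % n % m) : t1 = t2 := by
  have hn0 : 0 < n := by omega
  set a1 := (u + t1) % n with ha1def
  set a2 := (u + t2) % n with ha2def
  have ha1 : a1 < n := Nat.mod_lt _ hn0
  have ha2 : a2 < n := Nat.mod_lt _ hn0
  have d1 : n * ((u + t1) / n) + a1 = u + t1 := Nat.div_add_mod _ n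
  have d2 : n * ((u + t2) / n) + a2 = u + t2 := Nat.div_add_mod _ n
  have q1 : (u + t1) / n < 2 := by rw [Nat.div_lt_iff_lt_mul hn0]; omega
  have q2 : (u + t2) / n < 2 := by rw [Nat.div_lt_iff_lt_mul hn0]; omega
  set qq1 := (u + t1) / n with hq1def
  set qq2 := (u + t2) / n with hq2def
  set b1 := a1 % m with hb1def
  set b2 := a2 % m with hb2def
  have e1 : m * (a1 / m) + b1 = a1 := Nat.div_add_mod _ m
  have e2 : m * (a2 / m) + b2 = a2 := Nat.div_add_mod _ m
  have p1 : a1 / m < 2 := by rw [Nat.div_lt_iff_lt_mul hm0]; omega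
  have p2 : a2 / m < 2 := by rw [Nat.div_lt_iff_lt_mul hm0]; omega
  set pp1 := a1 / m with hp1def
  set pp2 := a2 / m with hp2def
  clear_value a1 a2 qq1 qq2 b1 b2 pp1 pp2
  clear ha1def ha2def hq1def hq2def hb1def hb2def hp1def hp2def
  rcases (by omega : qq1 = 0 ∨ qq1 = 1) with rfl | rfl <;>
    rcases (by omega : qq2 = 0 ∨ qq2 = 1) with rfl | rfl <;>
      rcases (by omega : pp1 = 0 ∨ pp1 = 1) with rfl | rfl <;>
        rcases (by omega : pp2 = 0 ∨ pp2 = 1) with rfl | rfl <;> omega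

lemma preconn_of_adj {V : Type*} {G H : SimpleGraph V}
    (h : ∀ u v, G.Adj u v → H.Reachable u v) (hG : G.Preconnected) : H.Preconnected := by
  intro u v
  obtain ⟨p⟩ := hG u v
  induction p with
  | nil => exact Reachable.refl _
  | cons ha q ih => exact (h _ _ ha).trans ih

lemma walk_reach {V : Type*} {G : SimpleGraph V} (a b : V) {u w : V} (p : G.Walk u w) :
    (G \ fromEdgeSet {s(a,b)}).Reachable u a ∨ (G \ fromEdgeSet {s(a,b)}).Reachable u b ∨
      (G \ fromEdgeSet {s(a,b)}).Reachable u w := by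
  induction p with
  | nil => exact Or.inr (Or.inr (Reachable.refl _))
  | @cons u x w ha q ih =>
    by_cases he : s(u, x) = s(a, b)
    · rw [Sym2.eq_iff] at he
      rcases he with ⟨rfl, rfl⟩ | ⟨rfl, rfl⟩
      · exact Or.inl (Reachable.refl _)
      · exact Or.inr (Or.inl (Reachable.refl _))
    · have hadj : (G \ fromEdgeSet {s(a,b)}).Adj u x := by
        simp only [sdiff_adj, fromEdgeSet_adj, Set.mem_singleton_iff]
        exact ⟨ha, fun hc => he hc.1⟩
      rcases ih with h | h | h
      · exact Or.inl (hadj.reachable.trans h)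
      · exact Or.inr (Or.inl (hadj.reachable.trans h))
      · exact Or.inr (Or.inr (hadj.reachable.trans h))

lemma reach_side {V : Type*} {G : SimpleGraph V} (hG : G.Preconnected) (a b v : V) :
    (G \ fromEdgeSet {s(a,b)}).Reachable v a ∨ (G \ fromEdgeSet {s(a,b)}).Reachable v b := by
  obtain ⟨p⟩ := hG v a
  rcases walk_reach a b p with h | h | h <;> tauto

lemma sep_aux {V : Type*} {H1 H2 : SimpleGraph V} {a b x y : V}
    (hab : ¬H1.Reachable a b) (hxy : ¬H2.Reachable x y)
    (hy : H1.Reachable y a) (hbx : H2.Reachable b x) :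
    b ≠ y ∧ ¬H1.Reachable b y ∧ ¬H2.Reachable b y := by
  refine ⟨?_, ?_, ?_⟩
  · rintro rfl; exact hab hy.symm
  · intro h; exact hab (h.trans hy).symm
  · intro h; exact hxy (hbx.symm.trans h)

lemma color_injOn {V : Type*} {G : SimpleGraph V} (hpre : G.Preconnected) (hac : G.IsAcyclic)
    {k : ℕ} (c : Sym2 V → Fin k)
    (hc : ∀ u v : V, u ≠ v → ∃ p : G.Walk u v, p.IsPath ∧ (p.edges.map c).Nodup) :
    Set.InjOn c G.edgeSet := by
  have hbr := isAcyclic_iff_forall_edge_isBridge.mp hac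
  intro e he f hf hcc
  by_contra hne
  induction e using Sym2.ind with | _ a b =>
  induction f using Sym2.ind with | _ x y =>
  have hab : ¬(G \ fromEdgeSet {s(a,b)}).Reachable a b := (isBridge_iff.mp (hbr he))
  have hxy : ¬(G \ fromEdgeSet {s(x,y)}).Reachable x y := (isBridge_iff.mp (hbr hf))
  have hxyE : (G \ fromEdgeSet {s(a,b)}).Reachable x y := by
    refine Adj.reachable ?_
    simp only [sdiff_adj, fromEdgeSet_adj, Set.mem_singleton_iff]
    exact ⟨(G.mem_edgeSet).mp hf, fun hcon => hne hcon.1.symm⟩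
  have main : ∃ u v : V, u ≠ v ∧ ¬(G \ fromEdgeSet {s(a,b)}).Reachable u v ∧
      ¬(G \ fromEdgeSet {s(x,y)}).Reachable u v := by
    rcases reach_side hpre a b x with hxa | hxb
    · rcases reach_side hpre a b y with hya | hyb
      · rcases reach_side hpre x y b with hbx | hby
        · obtain ⟨h1, h2, h3⟩ := sep_aux hab hxy hya hbx
          exact ⟨b, y, h1, h2, h3⟩
        · obtain ⟨h1, h2, h3⟩ := sep_aux hab (fun h => hxy h.symm) hxa hby
          exact ⟨b, x, h1, h2, h3⟩
      · exact ((hab ((hxa.symm.trans hxyE).trans hyb)).elim)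
    · rcases reach_side hpre a b y with hya | hyb
      · exact ((hab ((hya.symm.trans hxyE.symm).trans hxb)).elim)
      · rcases reach_side hpre x y a with hax | hay
        · obtain ⟨h1, h2, h3⟩ := sep_aux (fun h => hab h.symm) hxy hyb hax
          exact ⟨a, y, h1, h2, h3⟩
        · obtain ⟨h1, h2, h3⟩ := sep_aux (fun h => hab h.symm) (fun h => hxy h.symm) hxb hay
          exact ⟨a, x, h1, h2, h3⟩
  obtain ⟨u, v, huv, hu1, hu2⟩ := main
  obtain ⟨p, hp, hnod⟩ := hc u v huv
  have heP : s(a,b) ∈ p.edges := by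
    by_contra h
    refine hu1 ⟨p.transfer _ fun e' h' => ?_⟩
    simp only [edgeSet_sdiff, edgeSet_fromEdgeSet, edgeSet_sdiff_sdiff_isDiag, Set.mem_diff,
      Set.mem_singleton_iff]
    exact ⟨p.edges_subset_edgeSet h', fun hcon => h (hcon ▸ h')⟩
  have hfP : s(x,y) ∈ p.edges := by
    by_contra h
    refine hu2 ⟨p.transfer _ fun e' h' => ?_⟩
    simp only [edgeSet_sdiff, edgeSet_fromEdgeSet, edgeSet_sdiff_sdiff_isDiag, Set.mem_diff,
      Set.mem_singleton_iff]
    exact ⟨p.edges_subset_edgeSet h', fun hcon => h (hcon ▸ h')⟩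
  exact hne (List.inj_on_of_nodup_map hnod heP hfP hcc)

lemma exists_adj_closer {V : Type*} {G : SimpleGraph V} (h : G.Connected) (r v : V)
    (hv : v ≠ r) : ∃ w, G.Adj v w ∧ G.dist w r + 1 = G.dist v r := by
  obtain ⟨p, hp⟩ := h.exists_walk_length_eq_dist v r
  cases p with
  | nil => exact absurd rfl hv
  | @cons _ w _ ha q =>
    refine ⟨w, ha, ?_⟩
    have h1 : G.dist w r ≤ q.length := dist_le q
    have h2 : G.dist v r ≤ G.dist v w + G.dist w r := h.dist_triangle
    have h3 : G.dist v w ≤ 1 := by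
      have := dist_le (Walk.cons ha Walk.nil)
      simpa using this
    have h4 : (Walk.cons ha q).length = G.dist v r := hp
    rw [Walk.length_cons] at h4
    omega

lemma conn_card_le {n : ℕ} {G : SimpleGraph (Fin n)} (h : G.Connected) :
    n - 1 ≤ G.edgeSet.ncard := by
  rcases Nat.eq_zero_or_pos n with rfl | hn
  · simp
  classical
  set r : Fin n := ⟨0, hn⟩ with hr
  set f : Fin n → Sym2 (Fin n) := fun v =>
    if hv : v = r then s(v, v) else s(v, (exists_adj_closer h r v hv).choose) with hf
  have hmaps : ∀ v ∈ (Set.univ \ {r} : Set (Fin n)), f v ∈ G.edgeSet := by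
    intro v hv
    have hvr : v ≠ r := hv.2
    simp only [hf, dif_neg hvr, mem_edgeSet]
    exact (exists_adj_closer h r v hvr).choose_spec.1
  have hinj : Set.InjOn f (Set.univ \ {r}) := by
    intro v1 hv1 v2 hv2 heq
    have h1 : v1 ≠ r := hv1.2
    have h2 : v2 ≠ r := hv2.2
    simp only [hf, dif_neg h1, dif_neg h2, Sym2.eq_iff] at heq
    obtain ⟨hw1, hd1⟩ := (exists_adj_closer h r v1 h1).choose_spec
    obtain ⟨hw2, hd2⟩ := (exists_adj_closer h r v2 h2).choose_spec
    rcases heq with ⟨h12, _⟩ | ⟨ha', hb'⟩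
    · exact h12
    · rw [hb'] at hd1; rw [← ha'] at hd2; omega
  have hcard : (Set.univ \ {r} : Set (Fin n)).ncard = n - 1 := by
    rw [Set.ncard_diff_singleton_of_mem (Set.mem_univ r), Set.ncard_univ]
    simp
  calc n - 1 = (Set.univ \ {r} : Set (Fin n)).ncard := hcard.symm
    _ ≤ G.edgeSet.ncard := Set.ncard_le_ncard_of_injOn f hmaps hinj (Set.toFinite _)

lemma lower_bound {n d : ℕ} (h2 : d + 2 ≤ n) {G : SimpleGraph (Fin n)}
    (hG : IsRainbowConnected G d) : n ≤ G.edgeSet.ncard := by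
  obtain ⟨c, hc⟩ := hG
  have hn2 : 2 ≤ n := by omega
  haveI : NeZero n := ⟨by omega⟩
  have hpre : G.Preconnected := by
    intro u v
    by_cases huv : u = v
    · exact huv ▸ Reachable.refl u
    · obtain ⟨p, _, _⟩ := hc u v huv
      exact ⟨p⟩
  have hconn : G.Connected := Connected.mk hpre
  by_cases hac : G.IsAcyclic
  · exfalso
    have hinj := color_injOn hpre hac c hc
    have hle : G.edgeSet.ncard ≤ d := by
      have := Set.ncard_le_ncard_of_injOn c (fun x _ => Set.mem_univ (c x)) hinj
        (Set.toFinite (Set.univ : Set (Fin d)))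
      rwa [Set.ncard_univ, Nat.card_eq_fintype_card, Fintype.card_fin] at this
    have := conn_card_le hconn
    omega
  · -- there is a cycle; removing one of its edges keeps the graph connected
    rw [SimpleGraph.isAcyclic_iff_forall_adj_isBridge] at hac
    push_neg at hac
    obtain ⟨v0, x, hadj, hnbr⟩ := hac
    rw [isBridge_iff] at hnbr
    push_neg at hnbr
    have hRe : (G \ fromEdgeSet {s(v0, x)}).Reachable v0 x := hnbr
    set G' := G \ fromEdgeSet {s(v0, x)} with hG'
    have hpre' : G'.Preconnected := by
      refine preconn_of_adj (fun u w huw => ?_) hpre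
      by_cases he : s(u, w) = s(v0, x)
      · rw [Sym2.eq_iff] at he
        rcases he with ⟨rfl, rfl⟩ | ⟨rfl, rfl⟩
        · exact hRe
        · exact hRe.symm
      · refine Adj.reachable ?_
        simp only [hG', sdiff_adj, fromEdgeSet_adj, Set.mem_singleton_iff]
        exact ⟨huw, fun hcon => he hcon.1⟩
    have hconn' : G'.Connected := Connected.mk hpre'
    have hcard' := conn_card_le hconn'
    have hes : G'.edgeSet = G.edgeSet \ {s(v0, x)} := by
      simp [hG', edgeSet_sdiff, edgeSet_fromEdgeSet, edgeSet_sdiff_sdiff_isDiag]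
    have hmem : s(v0, x) ∈ G.edgeSet := hadj
    have hfin : G.edgeSet.Finite := Set.toFinite _
    have hd : (G.edgeSet \ {s(v0, x)}).ncard = G.edgeSet.ncard - 1 :=
      Set.ncard_diff_singleton_of_mem hmem
    have hpos : 1 ≤ G.edgeSet.ncard := by
      have : G.edgeSet.Nonempty := ⟨_, hmem⟩
      have := this.ncard_pos hfin
      omega
    rw [hes, hd] at hcard'
    omega

def cyc (n : ℕ) [NeZero n] : SimpleGraph (Fin n) := SimpleGraph.fromRel (fun i j => j = i + 1)

section
variable {n : ℕ} [NeZero n]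
open Fin.NatCast Fin.CommRing

lemma val_add_natCast (u : Fin n) (t : ℕ) : ((u + (t : Fin n)) : Fin n).val = (u.val + t) % n := by
  have h1 : ((u + (t : Fin n)) : Fin n).val = (u.val + t % n) % n := by
    rw [Fin.add_def]
    simp [Fin.val_natCast]
  rw [h1]
  conv_rhs => rw [Nat.add_mod, Nat.mod_eq_of_lt u.isLt]

lemma natCast_add_inj (u : Fin n) {t1 t2 : ℕ} (h1 : t1 < n) (h2 : t2 < n)
    (h : u + (t1 : Fin n) = u + (t2 : Fin n)) : t1 = t2 := by
  have hv := congrArg Fin.val h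
  rw [val_add_natCast, val_add_natCast] at hv
  have m2 : t1 ≡ t2 [MOD n] := Nat.ModEq.add_left_cancel' u.val hv
  exact m2.eq_of_lt_of_lt h1 h2

lemma cyc_adj_succ (hn : 2 ≤ n) (u : Fin n) : (cyc n).Adj u (u + 1) := by
  rw [cyc, fromRel_adj]
  refine ⟨?_, Or.inl rfl⟩
  intro h
  have h0 : u + ((0:ℕ) : Fin n) = u + ((1:ℕ) : Fin n) := by
    push_cast
    simpa using h
  have := natCast_add_inj u (by omega) (by omega) h0
  omega

lemma cast_two_ne_zero (hn : 4 ≤ n) {i : Fin n} (h : i = i + 1 + 1) : False := by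
  have h0 : i + ((0:ℕ) : Fin n) = i + ((2:ℕ) : Fin n) := by
    push_cast
    conv_lhs => rw [add_zero, h]
    ring
  have := natCast_add_inj i (by omega) (by omega) h0
  omega

lemma arc_exists (hn : 2 ≤ n) : ∀ (k : ℕ) (u : Fin n),
    ∃ p : (cyc n).Walk u (u + (k : Fin n)),
    p.support = (List.range (k+1)).map (fun t : ℕ => u + (t : Fin n)) ∧
    p.edges = (List.range k).map (fun t : ℕ => s(u + (t : Fin n), u + (t : Fin n) + 1)) := by
  intro k
  induction k with
  | zero =>
    intro u
    refine ⟨Walk.nil.copy rfl (by simp), ?_, ?_⟩ <;> simp [List.range_succ]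
  | succ k ih =>
    intro u
    obtain ⟨q, hs, he⟩ := ih (u + 1)
    have hcast : (u + 1) + (k : Fin n) = u + ((k+1 : ℕ) : Fin n) := by push_cast; ring
    refine ⟨(Walk.cons (cyc_adj_succ hn u) q).copy rfl hcast, ?_, ?_⟩
    · rw [Walk.support_copy, Walk.support_cons, hs]
      conv_rhs => rw [List.range_succ_eq_map]
      simp only [List.map_cons, List.map_map, Nat.cast_zero, add_zero]
      congr 1
      refine List.map_congr_left fun t _ => ?_
      simp only [Function.comp_apply]
      push_cast
      ring
    · rw [Walk.edges_copy, Walk.edges_cons, he]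
      conv_rhs => rw [List.range_succ_eq_map]
      simp only [List.map_cons, List.map_map, Nat.cast_zero, add_zero]
      congr 1
      refine List.map_congr_left fun t _ => ?_
      simp only [Function.comp_apply]
      have hts : u + 1 + (t : Fin n) = u + ((t + 1 : ℕ) : Fin n) := by push_cast; ring
      rw [Nat.succ_eq_add_one, ← hts]

lemma cyc_ncard (hn : 4 ≤ n) : (cyc n).edgeSet.ncard = n := by
  have hinj : Function.Injective (fun i : Fin n => s(i, i + 1)) := by
    intro i j h
    simp only [Sym2.eq_iff] at h
    rcases h with ⟨h1, _⟩ | ⟨hij, hji⟩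
    · exact h1
    · exfalso
      apply cast_two_ne_zero hn (i := i)
      rw [hji, ← hij]
  have hset : (cyc n).edgeSet = Set.range (fun i : Fin n => s(i, i + 1)) := by
    apply Set.eq_of_subset_of_subset
    · intro e he
      induction e using Sym2.ind with | _ i j =>
      rw [mem_edgeSet, cyc, fromRel_adj] at he
      rcases he with ⟨hne, hrel | hrel⟩
      · exact ⟨i, by rw [hrel]⟩
      · exact ⟨j, by rw [hrel]; exact Sym2.eq_swap⟩
    · rintro e ⟨i', rfl⟩
      exact ((cyc n).mem_edgeSet).mpr (cyc_adj_succ (by omega) i')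
  rw [hset, ← Set.image_univ, Set.ncard_image_of_injective _ hinj, Set.ncard_univ,
    Nat.card_eq_fintype_card, Fintype.card_fin]

lemma cyc_rainbow (d : ℕ) (h1 : n ≤ 2 * d) (h2 : d + 2 ≤ n) : IsRainbowConnected (cyc n) d := by
  have hn4 : 4 ≤ n := by omega
  set m : ℕ := (n + 1) / 2 with hm
  have hm0 : 0 < m := by omega
  have hmd : m ≤ d := by omega
  have hnm : n ≤ 2 * m := by omega
  have hmn : m < n := by omega
  have hbound : ∀ a : Fin n, a.val % m < d := fun a => lt_of_lt_of_le (Nat.mod_lt _ hm0) hmd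
  set g : Fin n → Fin n → Fin d := fun i j =>
    if j = i + 1 then ⟨i.val % m, hbound i⟩ else if i = j + 1 then ⟨j.val % m, hbound j⟩
      else ⟨0, by omega⟩ with hg
  have hgsymm : ∀ i j, g i j = g j i := by
    intro i j
    by_cases hij : j = i + 1 <;> by_cases hji : i = j + 1
    · exfalso
      apply cast_two_ne_zero hn4 (i := i)
      conv_lhs => rw [hji, hij]
    · have hne : i ≠ i + 1 + 1 := fun hcon => cast_two_ne_zero hn4 hcon
      simp [hg, hij, hji, hne]
    · have hne : j ≠ j + 1 + 1 := fun hcon => cast_two_ne_zero hn4 hcon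
      simp [hg, hij, hji, hne]
    · simp [hg, hij, hji]
  set c : Sym2 (Fin n) → Fin d := Sym2.lift ⟨g, hgsymm⟩ with hcdef
  have hceval : ∀ a : Fin n, c s(a, a + 1) = ⟨a.val % m, hbound a⟩ := by
    intro a
    rw [hcdef, Sym2.lift_mk]
    simp only [hg, if_pos rfl]
  refine ⟨c, ?_⟩
  have good : ∀ (w : Fin n) (k : ℕ), k ≤ n - m →
      ∃ p : (cyc n).Walk w (w + (k : Fin n)), p.IsPath ∧ (p.edges.map c).Nodup := by
    intro w k hk
    obtain ⟨p, hs, he⟩ := arc_exists (by omega) k w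
    refine ⟨p, ?_, ?_⟩
    · rw [Walk.isPath_def, hs]
      refine List.Nodup.map_on ?_ List.nodup_range
      intro t1 ht1 t2 ht2 heq
      rw [List.mem_range] at ht1 ht2
      exact natCast_add_inj w (by omega) (by omega) heq
    · rw [he, List.map_map]
      refine List.Nodup.map_on ?_ List.nodup_range
      intro t1 ht1 t2 ht2 heq
      rw [List.mem_range] at ht1 ht2
      simp only [Function.comp_apply] at heq
      rw [hceval, hceval, Fin.mk.injEq, val_add_natCast, val_add_natCast] at heq
      exact key_arith n m w.val t1 t2 k hnm hm0 hmn w.isLt hk ht1 ht2 heq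
  intro u v huv
  set K : ℕ := (v - u).val with hK
  have hKn : K < n := (v - u).isLt
  have hKv : u + (K : Fin n) = v := by
    rw [hK, Fin.cast_val_eq_self]
    ring
  by_cases hKle : K ≤ n - m
  · obtain ⟨p, hp, hnod⟩ := good u K hKle
    exact ⟨p.copy rfl hKv, by simpa using hp, by simpa using hnod⟩
  · have hk' : n - K ≤ n - m := by omega
    obtain ⟨p, hp, hnod⟩ := good v (n - K) hk'
    have hKu : v + ((n - K : ℕ) : Fin n) = u := by
      rw [Nat.cast_sub (le_of_lt hKn), Fin.natCast_self, hK, Fin.cast_val_eq_self]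
      ring
    refine ⟨((p.copy rfl hKu).reverse), ?_, ?_⟩
    · exact (by simpa using hp : (p.copy rfl hKu).IsPath).reverse
    · rw [Walk.edges_reverse, List.map_reverse, List.nodup_reverse]
      simpa using hnod


end

end RainbowAux

/-- `minRainbowEdges n d` is `t(n,d)`: the minimum number of edges among
all graphs of order `n` that are `d`-rainbow connected. -/
noncomputable def minRainbowEdges (n d : ℕ) : ℕ :=
  sInf {m | ∃ G : SimpleGraph (Fin n), G.edgeSet.ncard = m ∧ IsRainbowConnected G d}

/-- For `n/2 ≤ d ≤ n - 2`, `t(n,d) = n`. -/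
theorem t_eq_n (n d : ℕ) (h1 : n ≤ 2 * d) (h2 : d + 2 ≤ n) :
    minRainbowEdges n d = n := by
  haveI : NeZero n := ⟨by omega⟩
  have hn4 : 4 ≤ n := by omega
  have hmem : n ∈ {m | ∃ G : SimpleGraph (Fin n), G.edgeSet.ncard = m ∧ IsRainbowConnected G d} :=
    ⟨RainbowAux.cyc n, RainbowAux.cyc_ncard hn4, RainbowAux.cyc_rainbow d h1 h2⟩
  apply le_antisymm
  · exact Nat.sInf_le hmem
  · apply le_csInf ⟨n, hmem⟩
    rintro b ⟨G, rfl, hG⟩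
    exact RainbowAux.lower_bound h2 hG
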